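/- There exists n_0 (one may take n_0 = ⌈e^{20}⌉) such that for all n ≥ n_0, all integers d with 1 ≤ d ≤ n/(ln n)², and all integers r with 12 ≤ r ≤ n−1, it holds that B(n,d,r) < (d/n)². -/

import Mathlib

open scoped BigOperators ENNReal Classical

/-- The search space `{0,1}^n`. -/
abbrev Point (n : ℕ) := Fin n → Bool

/-- `OM x` is the number of one-bits of `x`. -/
def OM {n : ℕ} (x : Point n) : ℕ := (Finset.univ.filter fun i => x i = true).card

/-- Hamming distance between two points. -/
def hamming {n : ℕ} (x y : Point n) : ℕ := (Finset.univ.filter fun i => x i ≠ y i).card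

/-- A flip distribution `D = (p_0, …, p_n)` on `{0,…,n}`. -/
structure FlipDist (n : ℕ) where
  p : ℕ → ℝ
  nonneg : ∀ k, 0 ≤ p k
  sum_eq : ∑ k ∈ Finset.range (n+1), p k = 1
  zero_of_gt : ∀ k, n < k → p k = 0

/-- The mean `χ = Σ k·p_k` of a flip distribution. -/
noncomputable def FlipDist.mean {n : ℕ} (D : FlipDist n) : ℝ :=
  ∑ k ∈ Finset.range (n+1), (k : ℝ) * D.p k

/-- `mutP D x y` is the probability that `mut_D(x) = y`: sample `k ∼ D`, then flip a
uniformly random set of exactly `k` positions.  Exactly one `k`-set maps `x` to `y`,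
namely when `k` is the Hamming distance. -/
noncomputable def mutP {n : ℕ} (D : FlipDist n) (x y : Point n) : ℝ :=
  D.p (hamming x y) / (Nat.choose n (hamming x y) : ℝ)

/-- `x` is a global maximum of `f`. -/
def isOpt {n : ℕ} (f : Point n → ℝ) (x : Point n) : Prop := ∀ y, f y ≤ f x

/-- One-step transition probability of the elitist (1+1)-EA_D maximizing `f`. -/
noncomputable def eaStep {n : ℕ} (D : FlipDist n) (f : Point n → ℝ) (x y : Point n) : ℝ :=
  (if f x ≤ f y then mutP D x y else 0) +
  (if y = x then ∑ z ∈ Finset.univ.filter (fun z => f z < f x), mutP D x z else 0)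

/-- Distribution of the current search point `x^(t)` of the (1+1)-EA_D maximizing `f`,
with initial distribution `init`. -/
noncomputable def eaDist {n : ℕ} (D : FlipDist n) (f : Point n → ℝ)
    (init : Point n → ℝ) : ℕ → Point n → ℝ
  | 0 => init
  | t+1 => fun y => ∑ x : Point n, eaDist D f init t x * eaStep D f x y

/-- `survival D f init t = Pr[T > t]`: since the set of global maxima is absorbing for the
elitist chain, this is the probability that `x^(t)` is not a global maximum of `f`. -/
noncomputable def survival {n : ℕ} (D : FlipDist n) (f : Point n → ℝ)
    (init : Point n → ℝ) (t : ℕ) : ℝ :=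
  ∑ x ∈ Finset.univ.filter (fun x => ¬ isOpt f x), eaDist D f init t x

/-- Expected runtime `E[T] = Σ_{t≥0} Pr[T > t]` of the (1+1)-EA_D on `f`. -/
noncomputable def expRuntime {n : ℕ} (D : FlipDist n) (f : Point n → ℝ)
    (init : Point n → ℝ) : ℝ≥0∞ :=
  ∑' t : ℕ, ENNReal.ofReal (survival D f init t)

/-- The uniform initial distribution on `{0,1}^n`. -/
noncomputable def uniformInit (n : ℕ) : Point n → ℝ := fun _ => ((2:ℝ)^n)⁻¹

/-- The linear function `f(x) = Σ w_i x_i`. -/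
noncomputable def linF {n : ℕ} (w : Fin n → ℝ) : Point n → ℝ :=
  fun x => ∑ i : Fin n, w i * (if x i then 1 else 0)

/-- `dOf x = min(OM(x), n − OM(x))`. -/
def dOf {n : ℕ} (x : Point n) : ℕ := min (OM x) (n - OM x)

/-- `B(n,d,r) = Σ_{i=max(⌈r/2⌉, r+d−n)}^{min(d,r)} (2i−r)·C(d,i)·C(n−d,r−i)/C(n,r)`. -/
noncomputable def B (n d r : ℕ) : ℝ :=
  ∑ i ∈ Finset.Icc (max ((r+1)/2) (r + d - n)) (min d r),
    ((2*i - r : ℕ) : ℝ) * (Nat.choose d i : ℝ) * (Nat.choose (n-d) (r-i) : ℝ) /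
      (Nat.choose n r : ℝ)


/-- Auxiliary: `C(n, r-i) * (n-r+1)^i ≤ C(n,r) * r^{(i)}` for `i ≤ r ≤ n`. -/
lemma aux_choose_shift (n r : ℕ) (hrn : r ≤ n) :
    ∀ i, i ≤ r → Nat.choose n (r - i) * (n - r + 1) ^ i ≤
      Nat.choose n r * Nat.descFactorial r i := by
  intro i
  induction i with
  | zero => simp
  | succ i ih =>
    intro h
    have step : Nat.choose n (r - (i+1)) * (n - r + 1) ≤ Nat.choose n (r - i) * (r - i) := by
      have e := Nat.choose_succ_right_eq n (r - (i+1))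
      have h2 : r - (i+1) + 1 = r - i := by omega
      rw [h2] at e
      calc Nat.choose n (r - (i+1)) * (n - r + 1)
          ≤ Nat.choose n (r - (i+1)) * (n - (r - (i+1))) :=
            Nat.mul_le_mul_left _ (by omega)
        _ = Nat.choose n (r - i) * (r - i) := e.symm
    calc Nat.choose n (r - (i+1)) * (n - r + 1) ^ (i+1)
        = (Nat.choose n (r - (i+1)) * (n - r + 1)) * (n - r + 1) ^ i := by ring
      _ ≤ (Nat.choose n (r - i) * (r - i)) * (n - r + 1) ^ i :=
          Nat.mul_le_mul_right _ step
      _ = (Nat.choose n (r - i) * (n - r + 1) ^ i) * (r - i) := by ring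
      _ ≤ (Nat.choose n r * Nat.descFactorial r i) * (r - i) :=
          Nat.mul_le_mul_right _ (ih (by omega))
      _ = Nat.choose n r * Nat.descFactorial r (i+1) := by
          rw [Nat.descFactorial_succ]; ring

lemma aux_choose_le_two_pow (r i : ℕ) : Nat.choose r i ≤ 2 ^ r := by
  rcases le_or_gt i r with h | h
  · calc Nat.choose r i ≤ ∑ m ∈ Finset.range (r+1), Nat.choose r m :=
        Finset.single_le_sum (fun _ _ => Nat.zero_le _) (Finset.mem_range.mpr (by omega))
    _ = 2 ^ r := Nat.sum_range_choose r
  · simp [Nat.choose_eq_zero_of_lt h]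

/-- Key combinatorial bound. -/
lemma aux_key (n d r i : ℕ) (hrn : r ≤ n) (hid : i ≤ d) (hir : i ≤ r) (hri : r ≤ 2*i) :
    Nat.choose d i * Nat.choose (n-d) (r-i) * (n-r+1) ^ i ≤
      Nat.choose n r * (4 ^ i * d ^ i) := by
  have h4 : (4:ℕ) ^ i = 2 ^ i * 2 ^ i := by
    rw [show (4:ℕ) = 2 * 2 from rfl, mul_pow]
  calc Nat.choose d i * Nat.choose (n-d) (r-i) * (n-r+1) ^ i
      ≤ Nat.choose d i * (Nat.choose n (r-i) * (n-r+1) ^ i) := by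
        rw [mul_assoc]
        exact Nat.mul_le_mul_left _
          (Nat.mul_le_mul_right _ (Nat.choose_le_choose _ (Nat.sub_le n d)))
    _ ≤ Nat.choose d i * (Nat.choose n r * Nat.descFactorial r i) :=
        Nat.mul_le_mul_left _ (aux_choose_shift n r hrn i hir)
    _ = Nat.choose n r * ((Nat.factorial i * Nat.choose d i) * Nat.choose r i) := by
        rw [Nat.descFactorial_eq_factorial_mul_choose]; ring
    _ = Nat.choose n r * (Nat.descFactorial d i * Nat.choose r i) := by
        rw [Nat.descFactorial_eq_factorial_mul_choose]
    _ ≤ Nat.choose n r * (d ^ i * 4 ^ i) := by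
        refine Nat.mul_le_mul_left _ (Nat.mul_le_mul (Nat.descFactorial_le_pow d i) ?_)
        calc Nat.choose r i ≤ 2 ^ r := aux_choose_le_two_pow r i
          _ ≤ 2 ^ (2*i) := Nat.pow_le_pow_right (by norm_num) hri
          _ = 4 ^ i := by rw [two_mul, pow_add, h4]
    _ = Nat.choose n r * (4 ^ i * d ^ i) := by ring

set_option maxHeartbeats 1000000 in
/-- There exists `n₀` such that for all `n ≥ n₀`, all `d` with
`1 ≤ d ≤ n/(ln n)²`, and all `r` with `12 ≤ r ≤ n−1`, it holds that `B(n,d,r) < (d/n)²`. -/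
theorem stmt14 :
    ∃ n0 : ℕ, ∀ n : ℕ, n0 ≤ n → ∀ d : ℕ, 1 ≤ d → (d : ℝ) ≤ (n : ℝ) / (Real.log n)^2 →
      ∀ r : ℕ, 12 ≤ r → r ≤ n - 1 → B n d r < ((d : ℝ) / (n : ℝ))^2 := by
  refine ⟨2^30, fun n hn d hd1 hd2 r hr12 hrn => ?_⟩
  have hn1 : 1 ≤ n := le_trans (by norm_num) hn
  have hnR : (0:ℝ) < n := by exact_mod_cast hn1
  have hL : (20:ℝ) ≤ Real.log n := by
    have h1 : ((2:ℝ))^(30:ℕ) ≤ (n:ℝ) := by exact_mod_cast hn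
    have h2 : Real.log ((2:ℝ)^(30:ℕ)) ≤ Real.log n := Real.log_le_log (by positivity) h1
    rw [Real.log_pow] at h2
    have h3 := Real.log_two_gt_d9
    push_cast at h2
    nlinarith
  have hdR : (1:ℝ) ≤ (d:ℝ) := by exact_mod_cast hd1
  set x : ℝ := (d:ℝ) / n with hxdef
  have hx0 : 0 < x := by positivity
  have hL2 : (400:ℝ) ≤ (Real.log n)^2 := by nlinarith
  have hdn : 400 * (d:ℝ) ≤ n := by
    have h1 : (d:ℝ) * (Real.log n)^2 ≤ n := by
      rw [← le_div_iff₀ (by nlinarith)]; exact hd2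
    nlinarith
  have hx400 : x ≤ 1/400 := by
    rw [hxdef, div_le_div_iff₀ hnR (by norm_num)]
    nlinarith
  set a := max ((r+1)/2) (r + d - n) with ha
  set b := min d r with hb
  by_cases hab : a ≤ b
  · -- nonempty case
    have hia : (r+1)/2 ≤ a := le_max_left _ _
    have h6a : 6 ≤ a := le_trans (by omega) hia
    have hrd : r ≤ 2*d := by
      have : (r+1)/2 ≤ d := le_trans hia (le_trans hab (min_le_left _ _))
      omega
    have hr2a : r ≤ 2*a := by omega
    have hrle : r ≤ n := by omega
    have hdnN : 400 * d ≤ n := by exact_mod_cast hdn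
    have hnr1 : (0:ℝ) < ((n - r + 1 : ℕ) : ℝ) := by positivity
    have hcr : (0:ℝ) < (Nat.choose n r : ℝ) := by
      exact_mod_cast Nat.choose_pos hrle
    have h8x1 : 8 * x ≤ 1 := by nlinarith
    have h8x0 : (0:ℝ) ≤ 8 * x := by positivity
    have hxn : x * n = d := by
      rw [hxdef]; field_simp
    -- per-term bound
    have hterm : ∀ i ∈ Finset.Icc a b,
        ((2*i - r : ℕ) : ℝ) * (Nat.choose d i : ℝ) * (Nat.choose (n-d) (r-i) : ℝ) /
          (Nat.choose n r : ℝ) ≤ (2*a : ℝ) * (8*x)^a := by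
      intro i hi
      rw [Finset.mem_Icc] at hi
      obtain ⟨hi1, hi2⟩ := hi
      have hid : i ≤ d := le_trans hi2 (min_le_left _ _)
      have hir : i ≤ r := le_trans hi2 (min_le_right _ _)
      have hri : r ≤ 2*i := by
        have : (r+1)/2 ≤ i := le_trans hia hi1
        omega
      have hkey := aux_key n d r i hrle hid hir hri
      have hkeyR : (Nat.choose d i : ℝ) * (Nat.choose (n-d) (r-i) : ℝ) *
          ((n - r + 1 : ℕ) : ℝ)^i ≤ (Nat.choose n r : ℝ) * (4*(d:ℝ))^i := by
        have hc : ((Nat.choose d i * Nat.choose (n-d) (r-i) * (n-r+1)^i : ℕ) : ℝ) ≤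
            ((Nat.choose n r * (4^i * d^i) : ℕ) : ℝ) := by exact_mod_cast hkey
        push_cast at hc
        calc (Nat.choose d i : ℝ) * (Nat.choose (n-d) (r-i) : ℝ) * ((n - r + 1 : ℕ):ℝ)^i
            ≤ (Nat.choose n r : ℝ) * (4^i * (d:ℝ)^i) := by
              convert hc using 2 <;> push_cast <;> ring
          _ = (Nat.choose n r : ℝ) * (4*(d:ℝ))^i := by rw [mul_pow]
      have hfrac : (Nat.choose d i : ℝ) * (Nat.choose (n-d) (r-i) : ℝ) /
          (Nat.choose n r : ℝ) ≤ (4*(d:ℝ) / ((n - r + 1 : ℕ):ℝ))^i := by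
        rw [div_pow, div_le_div_iff₀ hcr (by positivity)]
        calc (Nat.choose d i : ℝ) * (Nat.choose (n-d) (r-i) : ℝ) * ((n-r+1:ℕ):ℝ)^i
            ≤ (Nat.choose n r : ℝ) * (4*(d:ℝ))^i := hkeyR
          _ = (4*(d:ℝ))^i * (Nat.choose n r : ℝ) := by ring
      have hq : 4*(d:ℝ) / ((n - r + 1 : ℕ):ℝ) ≤ 8 * x := by
        rw [div_le_iff₀ hnr1]
        have h2n : (n:ℝ) ≤ 2 * ((n - r + 1 : ℕ):ℝ) := by
          have : n ≤ 2 * (n - r + 1) := by omega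
          exact_mod_cast this
        nlinarith [mul_le_mul_of_nonneg_left h2n hx0.le]
      have hqpow : (4*(d:ℝ) / ((n - r + 1 : ℕ):ℝ))^i ≤ (8*x)^a := by
        calc (4*(d:ℝ) / ((n - r + 1 : ℕ):ℝ))^i ≤ (8*x)^i :=
            pow_le_pow_left₀ (by positivity) hq i
          _ ≤ (8*x)^a := pow_le_pow_of_le_one h8x0 h8x1 hi1
      have ht : ((2*i - r : ℕ) : ℝ) ≤ (2*a : ℝ) := by
        have h1 : (2*i - r : ℕ) ≤ 2*a := by omega
        exact_mod_cast h1
      calc ((2*i - r : ℕ) : ℝ) * (Nat.choose d i : ℝ) * (Nat.choose (n-d) (r-i) : ℝ) /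
            (Nat.choose n r : ℝ)
          = ((2*i - r : ℕ) : ℝ) * ((Nat.choose d i : ℝ) * (Nat.choose (n-d) (r-i) : ℝ) /
            (Nat.choose n r : ℝ)) := by ring
        _ ≤ (2*a : ℝ) * (8*x)^a :=
            mul_le_mul ht (le_trans hfrac hqpow) (by positivity) (by positivity)
    have hcard : (Finset.Icc a b).card ≤ a + 1 := by
      rw [Nat.card_Icc]
      omega
    have hsum : B n d r ≤ ((a:ℝ) + 1) * ((2*a : ℝ) * (8*x)^a) := by
      rw [B, ← ha, ← hb]
      calc ∑ i ∈ Finset.Icc a b,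
            ((2*i - r : ℕ) : ℝ) * (Nat.choose d i : ℝ) * (Nat.choose (n-d) (r-i) : ℝ) /
              (Nat.choose n r : ℝ)
          ≤ ∑ _i ∈ Finset.Icc a b, (2*a : ℝ) * (8*x)^a := Finset.sum_le_sum hterm
        _ = ((Finset.Icc a b).card : ℝ) * ((2*a : ℝ) * (8*x)^a) := by
            rw [Finset.sum_const, nsmul_eq_mul]
        _ ≤ ((a:ℝ) + 1) * ((2*a : ℝ) * (8*x)^a) := by
            apply mul_le_mul_of_nonneg_right _ (by positivity)
            exact_mod_cast hcard
    have hAn : ((a:ℝ) + 1) * (2*(a:ℝ)) ≤ 2 * 4^a := by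
      have h1 : a + 1 ≤ 2^a := (Nat.lt_two_pow_self (n := a))
      have h2 : 2*a ≤ 2*2^a := by
        have := (Nat.lt_two_pow_self (n := a))
        omega
      have h3 : (a+1)*(2*a) ≤ 2 * 4^a := by
        calc (a+1)*(2*a) ≤ 2^a * (2*2^a) := Nat.mul_le_mul h1 h2
          _ = 2 * 4^a := by
              rw [show (4:ℕ) = 2*2 from rfl, mul_pow]; ring
      exact_mod_cast h3
    have hfin : ((a:ℝ) + 1) * ((2*a : ℝ) * (8*x)^a) < x^2 := by
      have hstep : ((a:ℝ) + 1) * ((2*a : ℝ) * (8*x)^a) ≤ 2 * (32*x)^a := by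
        calc ((a:ℝ) + 1) * ((2*a : ℝ) * (8*x)^a)
            = (((a:ℝ) + 1) * (2*(a:ℝ))) * (8*x)^a := by ring
          _ ≤ (2 * 4^a) * (8*x)^a := mul_le_mul_of_nonneg_right hAn (by positivity)
          _ = 2 * (4*(8*x))^a := by rw [mul_pow (4:ℝ) (8*x) a]; ring
          _ = 2 * (32*x)^a := by rw [show (4:ℝ)*(8*x) = 32*x by ring]
      have h32x : 32*x ≤ 1 := by nlinarith
      have h32x0 : (0:ℝ) ≤ 32*x := by positivity
      have hstep2 : (32*x)^a ≤ (32*x)^6 := pow_le_pow_of_le_one h32x0 h32x h6a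
      have hx4 : x^4 ≤ (1/400)^4 := pow_le_pow_left₀ hx0.le hx400 4
      have e32 : (32*x)^6 = 32^6 * x^6 := by rw [mul_pow]
      have hfin2 : 2 * (32*x)^6 < x^2 := by
        rw [e32]
        nlinarith [pow_pos hx0 2, sq_nonneg x, mul_le_mul_of_nonneg_right hx4 (sq_nonneg x)]
      linarith
    exact lt_of_le_of_lt hsum hfin
  · rw [B, ← ha, ← hb, Finset.Icc_eq_empty hab, Finset.sum_empty]
    positivity
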